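/- Let 0 < α ≤ γ < 1 and [a,b] ⊂ (0,∞). There is a finite constant C₁(α,γ) such that for all H, H' ∈ [α,γ] and all t ∈ [a,b], ∫₀^∞ (1-cos(tθ)) (θ^{-H-1/2} - θ^{-H'-1/2})² dθ ≤ C₁(α,γ)|H-H'|², i.e., E[(B^H_t - B^{H'}_t)²] ≤ C₁(α,γ)|H-H'|² for fractional Brownian motions defined through their common harmonisable representation. -/

import Mathlib

open Real Set MeasureTheory

private lemma exp_diff_le {u v w : ℝ} (hu : u ≤ w) (hv : v ≤ w) :
    |Real.exp u - Real.exp v| ≤ Real.exp w * |u - v| := by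
  wlog h : v ≤ u generalizing u v
  · rw [abs_sub_comm, abs_sub_comm u v]; exact this hv hu (le_of_not_ge h)
  have h1 := Real.add_one_le_exp (v - u)
  have h2 : Real.exp u * ((v - u) + 1) ≤ Real.exp v := by
    calc Real.exp u * ((v - u) + 1) ≤ Real.exp u * Real.exp (v - u) := by
          have := Real.exp_pos u; nlinarith
      _ = Real.exp v := by rw [← Real.exp_add]; ring_nf
  have h3 : Real.exp u ≤ Real.exp w := Real.exp_le_exp.2 hu
  have h4 : 0 ≤ Real.exp u - Real.exp v → True := fun _ => trivial
  rw [abs_of_nonneg (by linarith : (0:ℝ) ≤ u - v),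
    abs_of_nonneg (by exact sub_nonneg.2 (Real.exp_le_exp.2 h))]
  nlinarith [Real.exp_pos u]

private lemma rpow_diff_le {θ α γ H H' : ℝ} (hθ : 0 < θ)
    (h1 : α ≤ H) (h2 : H ≤ γ) (h3 : α ≤ H') (h4 : H' ≤ γ) :
    |θ ^ (-H) - θ ^ (-H')| ≤ (θ ^ (-α) + θ ^ (-γ)) * |Real.log θ| * |H - H'| := by
  set L := Real.log θ with hL
  have hw : ∀ K : ℝ, α ≤ K → K ≤ γ → -K * L ≤ max (-α * L) (-γ * L) := by
    intro K hK1 hK2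
    rcases le_or_gt 0 L with h | h
    · exact le_max_of_le_left (by nlinarith)
    · exact le_max_of_le_right (by nlinarith)
  have key := exp_diff_le (hw H h1 h2) (hw H' h3 h4)
  have e1 : ∀ K : ℝ, θ ^ (-K) = Real.exp (-K * L) := fun K => by
    rw [Real.rpow_def_of_pos hθ, hL]; ring_nf
  have e2 : Real.exp (max (-α * L) (-γ * L)) ≤ θ ^ (-α) + θ ^ (-γ) := by
    rw [e1 α, e1 γ]
    rcases max_cases (-α * L) (-γ * L) with ⟨h, _⟩ | ⟨h, _⟩ <;> rw [h] <;>
      [exact le_add_of_nonneg_right (Real.exp_pos _).le;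
       exact le_add_of_nonneg_left (Real.exp_pos _).le]
  have e3 : |(-H * L) - (-H' * L)| = |L| * |H - H'| := by
    have : (-H * L) - (-H' * L) = -(L * (H - H')) := by ring
    rw [this, abs_neg, abs_mul]
  rw [e1 H, e1 H']
  calc |Real.exp (-H * L) - Real.exp (-H' * L)|
      ≤ Real.exp (max (-α * L) (-γ * L)) * |(-H * L) - (-H' * L)| := key
    _ ≤ (θ ^ (-α) + θ ^ (-γ)) * (|L| * |H - H'|) := by
        rw [e3]; exact mul_le_mul_of_nonneg_right e2 (by positivity)
    _ = (θ ^ (-α) + θ ^ (-γ)) * |L| * |H - H'| := by ring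

private lemma log_le_rpow {θ δ : ℝ} (hθ : 1 ≤ θ) (hδ : 0 < δ) :
    Real.log θ ≤ θ ^ δ / δ := by
  have h0 : (0:ℝ) < θ := lt_of_lt_of_le one_pos hθ
  have := Real.log_le_sub_one_of_pos (Real.rpow_pos_of_pos h0 δ)
  rw [Real.log_rpow h0] at this
  rw [le_div_iff₀ hδ]
  nlinarith

private lemma abs_log_le_rpow {θ δ : ℝ} (h0 : 0 < θ) (hθ : θ ≤ 1) (hδ : 0 < δ) :
    |Real.log θ| ≤ θ ^ (-δ) / δ := by
  have h1 : (1:ℝ) ≤ θ⁻¹ := one_le_inv_iff₀.2 ⟨h0, hθ⟩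
  have := log_le_rpow h1 hδ
  have e : (θ⁻¹) ^ δ = θ ^ (-δ) := by
    rw [← Real.rpow_neg_one θ, ← Real.rpow_mul h0.le]; norm_num
  rw [Real.log_inv, e] at this
  rw [abs_of_nonpos (Real.log_nonpos h0.le hθ)]
  exact this

private noncomputable def Mfun (α γ b : ℝ) (θ : ℝ) : ℝ :=
  min 2 ((b * θ) ^ 2 / 2) * ((Real.log θ) ^ 2 * (θ ^ (-α) + θ ^ (-γ)) ^ 2 / θ)

private lemma Mfun_contOn (α γ b : ℝ) : ContinuousOn (Mfun α γ b) (Set.Ioi 0) := by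
  unfold Mfun
  apply ContinuousOn.mul
  · exact (continuousOn_const.inf (((continuous_const.mul continuous_id).pow 2).continuousOn.div_const 2))
  · apply ContinuousOn.div
    · apply ContinuousOn.mul
      · exact (Real.continuousOn_log.mono (fun x hx => ne_of_gt hx)).pow 2
      · exact ((continuousOn_id.rpow_const (fun x hx => Or.inl (ne_of_gt hx))).add
          (continuousOn_id.rpow_const (fun x hx => Or.inl (ne_of_gt hx)))).pow 2
    · exact continuousOn_id
    · exact fun x hx => ne_of_gt hx

private lemma Mfun_nonneg {α γ b : ℝ} {θ : ℝ} (hθ : 0 < θ) : 0 ≤ Mfun α γ b θ := by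
  unfold Mfun
  positivity

private lemma sq_rpow_aux {θ : ℝ} (h0 : 0 < θ) (c : ℝ) : (θ ^ c) ^ (2:ℕ) = θ ^ (2 * c) := by
  rw [← Real.rpow_natCast (θ ^ c) 2, ← Real.rpow_mul h0.le]
  norm_num [mul_comm]

private lemma Mfun_integrable {α γ b : ℝ} (hα : 0 < α) (hαγ : α ≤ γ) (hγ : γ < 1) :
    IntegrableOn (Mfun α γ b) (Set.Ioi 0) := by
  have h01 : Set.Ioo (0:ℝ) 1 ∪ Set.Ici 1 = Set.Ioi 0 := Set.Ioo_union_Ici_eq_Ioi zero_lt_one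
  rw [← h01, integrableOn_union]
  constructor
  · -- on Ioo 0 1
    have hδ : (0:ℝ) < (1 - γ)/2 := by linarith
    set δ := (1 - γ)/2 with hδdef
    set K := 2 * b^2 / δ^2 with hKdef
    have hK : 0 ≤ K := by positivity
    have hgint : IntegrableOn (fun θ : ℝ => K * θ ^ (-γ)) (Set.Ioo 0 1) := by
      exact ((intervalIntegral.integrableOn_Ioo_rpow_iff zero_lt_one).2 (by linarith)).const_mul K
    apply Integrable.mono hgint
    · exact ((Mfun_contOn α γ b).mono Set.Ioo_subset_Ioi_self).aestronglyMeasurable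
        measurableSet_Ioo
    · rw [ae_restrict_iff' measurableSet_Ioo]
      refine Filter.Eventually.of_forall (fun θ hθ => ?_)
      obtain ⟨h0, h1⟩ := hθ
      have hrγ : (0:ℝ) < θ ^ (-γ) := Real.rpow_pos_of_pos h0 _
      rw [Real.norm_eq_abs, Real.norm_eq_abs, abs_of_nonneg (Mfun_nonneg h0),
        abs_of_nonneg (by positivity)]
      have hlog : (Real.log θ)^2 ≤ (θ ^ (-δ) / δ)^2 := by
        rw [← sq_abs]
        exact pow_le_pow_left₀ (abs_nonneg _) (abs_log_le_rpow h0 h1.le hδ) 2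
      have hsum : (θ ^ (-α) + θ ^ (-γ))^2 ≤ (2 * θ ^ (-γ))^2 := by
        have h1' : θ ^ (-α) ≤ θ ^ (-γ) :=
          Real.rpow_le_rpow_of_exponent_ge h0 h1.le (by linarith)
        have h2' : (0:ℝ) ≤ θ ^ (-α) := (Real.rpow_pos_of_pos h0 _).le
        nlinarith
      calc Mfun α γ b θ
          ≤ ((b * θ)^2 / 2) * ((θ ^ (-δ) / δ)^2 * (2 * θ ^ (-γ))^2 / θ) := by
            unfold Mfun
            apply mul_le_mul (min_le_right _ _) ?_ (by positivity) (by positivity)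
            gcongr
        _ = K * (θ ^ (2:ℕ) * (θ ^ (-δ)) ^ (2:ℕ) * (θ ^ (-γ)) ^ (2:ℕ) * θ⁻¹) := by
            rw [hKdef]; field_simp
        _ = K * θ ^ (-γ) := by
            rw [sq_rpow_aux h0, sq_rpow_aux h0, ← Real.rpow_natCast θ 2,
              ← Real.rpow_neg_one θ, ← Real.rpow_add h0, ← Real.rpow_add h0,
              ← Real.rpow_add h0]
            congr 1
            push_cast
            rw [hδdef]; ring
  · -- on Ici 1
    have hδ : (0:ℝ) < α/2 := by linarith
    set δ := α/2 with hδdef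
    set K := 2 * 4 / δ^2 with hKdef
    have hK : 0 ≤ K := by positivity
    have hgint : IntegrableOn (fun θ : ℝ => K * θ ^ (-1-α)) (Set.Ici 1) := by
      rw [integrableOn_Ici_iff_integrableOn_Ioi]
      exact (integrableOn_Ioi_rpow_of_lt (by linarith) zero_lt_one).const_mul K
    apply Integrable.mono hgint
    · exact ((Mfun_contOn α γ b).mono (fun x (hx : x ∈ Set.Ici (1:ℝ)) => Set.mem_Ioi.2 (lt_of_lt_of_le zero_lt_one hx))).aestronglyMeasurable
        measurableSet_Ici
    · rw [ae_restrict_iff' measurableSet_Ici]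
      refine Filter.Eventually.of_forall (fun θ hθ => ?_)
      have h0 : (0:ℝ) < θ := lt_of_lt_of_le zero_lt_one hθ
      rw [Real.norm_eq_abs, Real.norm_eq_abs, abs_of_nonneg (Mfun_nonneg h0),
        abs_of_nonneg (by positivity)]
      have hlog : (Real.log θ)^2 ≤ (θ ^ δ / δ)^2 := by
        rw [← sq_abs]
        refine pow_le_pow_left₀ (abs_nonneg _) ?_ 2
        rw [abs_of_nonneg (Real.log_nonneg hθ)]
        exact log_le_rpow hθ hδ
      have hsum : (θ ^ (-α) + θ ^ (-γ))^2 ≤ (2 * θ ^ (-α))^2 := by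
        have h1' : θ ^ (-γ) ≤ θ ^ (-α) :=
          Real.rpow_le_rpow_of_exponent_le hθ (by linarith)
        have h2' : (0:ℝ) ≤ θ ^ (-γ) := (Real.rpow_pos_of_pos h0 _).le
        nlinarith
      calc Mfun α γ b θ
          ≤ 2 * ((θ ^ δ / δ)^2 * (2 * θ ^ (-α))^2 / θ) := by
            unfold Mfun
            apply mul_le_mul (min_le_left _ _) ?_ (by positivity) (by norm_num)
            gcongr
        _ = K * ((θ ^ δ) ^ (2:ℕ) * (θ ^ (-α)) ^ (2:ℕ) * θ⁻¹) := by
            rw [hKdef]; field_simp; ring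
        _ = K * θ ^ (-1-α) := by
            rw [sq_rpow_aux h0, sq_rpow_aux h0, ← Real.rpow_neg_one θ,
              ← Real.rpow_add h0, ← Real.rpow_add h0]
            congr 1
            rw [hδdef]; ring

private lemma pointwise_bound {α γ a b H H' t θ : ℝ} (hαγ : α ≤ γ)
    (hH : H ∈ Set.Icc α γ) (hH' : H' ∈ Set.Icc α γ) (ht : t ∈ Set.Icc a b)
    (ha : 0 < a) (hθ : 0 < θ) :
    (1 - Real.cos (t * θ)) * (θ ^ (-H - 1/2) - θ ^ (-H' - 1/2)) ^ 2 ≤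
      (H - H') ^ 2 * Mfun α γ b θ := by
  have hsplit : ∀ K : ℝ, θ ^ (-K - 1/2) = θ ^ (-K) * θ ^ (-(1/2) : ℝ) := fun K => by
    rw [show -K - 1/2 = -K + (-(1/2) : ℝ) by ring, Real.rpow_add hθ]
  have hsq : (θ ^ (-(1/2) : ℝ)) ^ (2:ℕ) = θ⁻¹ := by
    rw [sq_rpow_aux hθ]; norm_num [Real.rpow_neg_one]
  have hcos1 : 0 ≤ 1 - Real.cos (t * θ) := by linarith [Real.cos_le_one (t * θ)]
  have hcos2 : 1 - Real.cos (t * θ) ≤ min 2 ((b * θ) ^ 2 / 2) := by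
    apply le_min
    · linarith [Real.neg_one_le_cos (t * θ)]
    · have h := Real.one_sub_sq_div_two_le_cos (x := t * θ)
      have htb : t ^ 2 ≤ b ^ 2 := by nlinarith [ht.1, ht.2]
      nlinarith [sq_nonneg θ]
  have hdiff : (θ ^ (-H) - θ ^ (-H')) ^ 2 ≤
      (θ ^ (-α) + θ ^ (-γ)) ^ 2 * (Real.log θ) ^ 2 * (H - H') ^ 2 := by
    have hkey := rpow_diff_le hθ hH.1 hH.2 hH'.1 hH'.2
    calc (θ ^ (-H) - θ ^ (-H')) ^ 2 = |θ ^ (-H) - θ ^ (-H')| ^ 2 := (sq_abs _).symm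
      _ ≤ ((θ ^ (-α) + θ ^ (-γ)) * |Real.log θ| * |H - H'|) ^ 2 :=
          pow_le_pow_left₀ (abs_nonneg _) hkey 2
      _ = (θ ^ (-α) + θ ^ (-γ)) ^ 2 * (Real.log θ) ^ 2 * (H - H') ^ 2 := by
          rw [mul_pow, mul_pow, sq_abs, sq_abs]
  have hmin0 : (0:ℝ) ≤ min 2 ((b * θ) ^ 2 / 2) := le_min (by norm_num) (by positivity)
  calc (1 - Real.cos (t * θ)) * (θ ^ (-H - 1/2) - θ ^ (-H' - 1/2)) ^ 2
      = (1 - Real.cos (t * θ)) * ((θ ^ (-H) - θ ^ (-H')) ^ 2 * θ⁻¹) := by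
        rw [hsplit H, hsplit H', ← sub_mul, mul_pow, hsq]
    _ ≤ min 2 ((b * θ) ^ 2 / 2) *
          ((θ ^ (-α) + θ ^ (-γ)) ^ 2 * (Real.log θ) ^ 2 * (H - H') ^ 2 * θ⁻¹) := by
        apply mul_le_mul hcos2 _ (by positivity) hmin0
        exact mul_le_mul_of_nonneg_right hdiff (inv_nonneg.2 hθ.le)
    _ = (H - H') ^ 2 * Mfun α γ b θ := by
        unfold Mfun; ring

theorem fBm_regularity_in_H (α γ a b : ℝ) (hα : 0 < α) (hαγ : α ≤ γ) (hγ : γ < 1)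
    (ha : 0 < a) (hab : a ≤ b) :
    ∃ C : ℝ, 0 < C ∧ ∀ H H' : ℝ, H ∈ Set.Icc α γ → H' ∈ Set.Icc α γ →
      ∀ t ∈ Set.Icc a b,
        (∫ θ in Set.Ioi (0:ℝ),
            (1 - Real.cos (t * θ)) * (θ ^ (-H - 1/2) - θ ^ (-H' - 1/2)) ^ 2) ≤
          C * |H - H'| ^ 2 := by
  have hMint : IntegrableOn (Mfun α γ b) (Set.Ioi 0) := Mfun_integrable hα hαγ hγ
  have hInt0 : 0 ≤ ∫ θ in Set.Ioi (0:ℝ), Mfun α γ b θ :=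
    setIntegral_nonneg measurableSet_Ioi (fun θ hθ => Mfun_nonneg hθ)
  refine ⟨(∫ θ in Set.Ioi (0:ℝ), Mfun α γ b θ) + 1, by linarith, ?_⟩
  intro H H' hH hH' t ht
  have key : (∫ θ in Set.Ioi (0:ℝ),
      (1 - Real.cos (t * θ)) * (θ ^ (-H - 1/2) - θ ^ (-H' - 1/2)) ^ 2) ≤
      ∫ θ in Set.Ioi (0:ℝ), (H - H') ^ 2 * Mfun α γ b θ := by
    apply integral_mono_of_nonneg
    · filter_upwards [ae_restrict_mem measurableSet_Ioi] with θ hθ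
      have : 0 ≤ 1 - Real.cos (t * θ) := by linarith [Real.cos_le_one (t * θ)]
      positivity
    · exact hMint.const_mul _
    · filter_upwards [ae_restrict_mem measurableSet_Ioi] with θ hθ
      exact pointwise_bound hαγ hH hH' ht ha hθ
  rw [MeasureTheory.integral_const_mul] at key
  have habs : |H - H'| ^ 2 = (H - H') ^ 2 := sq_abs _
  rw [habs]
  nlinarith [sq_nonneg (H - H')]
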